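/- Define D(λ) = k(1 + λ²) + (n - k)·ρ(1, λ) where ρ(1, λ) = 2(1 + λ²)Q(λ) - √(2/π)·λ·e^{-λ²/2}, with integers 0 < k < n. Then D is a strictly convex function of λ on (0, ∞). -/

import Mathlib

open Real

noncomputable def Qtail (x : ℝ) : ℝ := (1 / Real.sqrt (2 * π)) * ∫ t in Set.Ioi x, Real.exp (-t ^ 2 / 2)

noncomputable def rho1 (τ : ℝ) : ℝ :=
  2 * (1 + τ ^ 2) * Qtail τ - Real.sqrt (2 / π) * τ * Real.exp (-τ ^ 2 / 2)

open MeasureTheory intervalIntegral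

lemma g_cont : Continuous (fun t : ℝ => Real.exp (-t ^ 2 / 2)) := by continuity

lemma g_int : Integrable (fun t : ℝ => Real.exp (-t ^ 2 / 2)) := by
  have h := integrable_exp_neg_mul_sq (show (0:ℝ) < 1/2 by norm_num)
  have : (fun t : ℝ => Real.exp (-t ^ 2 / 2)) = fun t : ℝ => Real.exp (-(1/2) * t ^ 2) := by
    funext t; ring_nf
  rw [this]; exact h

lemma hasDerivAt_g (x : ℝ) :
    HasDerivAt (fun t : ℝ => Real.exp (-t ^ 2 / 2)) (-x * Real.exp (-x ^ 2 / 2)) x := by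
  have h1 : HasDerivAt (fun t : ℝ => -t ^ 2 / 2) (-x) x := by
    have := ((hasDerivAt_pow 2 x).neg.div_const 2)
    convert this using 1; rfl; rfl; simp; ring
  simpa [mul_comm] using h1.exp

lemma key (x : ℝ) : (∫ t in Set.Ioi x, Real.exp (-t ^ 2 / 2)) =
    (∫ t : ℝ, Real.exp (-t ^ 2 / 2)) - ((∫ t in Set.Iic (0:ℝ), Real.exp (-t ^ 2 / 2))
      + ∫ t in (0:ℝ)..x, Real.exp (-t ^ 2 / 2)) := by
  have h1 : (∫ t in Set.Iic x, Real.exp (-t ^ 2 / 2)) + (∫ t in Set.Ioi x, Real.exp (-t ^ 2 / 2))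
      = ∫ t : ℝ, Real.exp (-t ^ 2 / 2) := by
    have := integral_add_compl (measurableSet_Iic (a := x)) g_int
    simpa using this
  have h2 : (∫ t in Set.Iic x, Real.exp (-t ^ 2 / 2)) - (∫ t in Set.Iic (0:ℝ), Real.exp (-t ^ 2 / 2))
      = ∫ t in (0:ℝ)..x, Real.exp (-t ^ 2 / 2) :=
    integral_Iic_sub_Iic g_int.integrableOn g_int.integrableOn
  linarith

lemma hasDerivAt_Qtail (x : ℝ) :
    HasDerivAt Qtail (-(1 / Real.sqrt (2 * π) * Real.exp (-x ^ 2 / 2))) x := by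
  have hF : HasDerivAt (fun u => ∫ t in (0:ℝ)..u, Real.exp (-t ^ 2 / 2))
      (Real.exp (-x ^ 2 / 2)) x :=
    integral_hasDerivAt_right (g_cont.intervalIntegrable 0 x)
      (g_cont.stronglyMeasurableAtFilter _ _) g_cont.continuousAt
  have h : HasDerivAt (fun u => ∫ t in Set.Ioi u, Real.exp (-t ^ 2 / 2))
      (-Real.exp (-x ^ 2 / 2)) x := by
    have := ((hF.const_add (∫ t in Set.Iic (0:ℝ), Real.exp (-t ^ 2 / 2))).const_sub
      (∫ t : ℝ, Real.exp (-t ^ 2 / 2)))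
    refine this.congr_of_eventuallyEq ?_
    filter_upwards with u using (key u)
  have h2 := h.const_mul (1 / Real.sqrt (2 * π))
  have heq : Qtail = fun u => (1 / Real.sqrt (2 * π)) * ∫ t in Set.Ioi u, Real.exp (-t ^ 2 / 2) := rfl
  rw [heq]
  convert h2 using 1; rfl; rfl; ring

lemma sqrt2pi : Real.sqrt (2 / π) = 2 * (1 / Real.sqrt (2 * π)) := by
  have hπ : (0:ℝ) < π := pi_pos
  rw [show (2 / π : ℝ) = 4 / (2 * π) by field_simp; ring,
    Real.sqrt_div (by norm_num : (0:ℝ) ≤ 4),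
    show Real.sqrt 4 = 2 by rw [show (4:ℝ) = 2 ^ 2 by norm_num, Real.sqrt_sq (by norm_num)]]
  ring

lemma hasDerivAt_rho1 (x : ℝ) :
    HasDerivAt rho1 (4 * x * Qtail x - 4 * (1 / Real.sqrt (2 * π)) * Real.exp (-x ^ 2 / 2)) x := by
  have hq := hasDerivAt_Qtail x
  have hg := hasDerivAt_g x
  have ha : HasDerivAt (fun τ : ℝ => 2 * (1 + τ ^ 2)) (4 * x) x := by
    have := ((hasDerivAt_pow 2 x).const_add 1).const_mul 2
    convert this using 1; rfl; rfl; simp; ring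
  have hb : HasDerivAt (fun τ : ℝ => Real.sqrt (2 / π) * τ) (Real.sqrt (2 / π)) x := by
    simpa using (hasDerivAt_id x).const_mul (Real.sqrt (2 / π))
  have h := (ha.mul hq).sub (hb.mul hg)
  have heq : rho1 = fun τ => (2 * (1 + τ ^ 2)) * Qtail τ
      - (Real.sqrt (2 / π) * τ) * Real.exp (-τ ^ 2 / 2) := by
    rfl
  rw [heq]
  convert h using 1; rfl; rfl; rfl
  rw [sqrt2pi]; ring

lemma hasDerivAt_rho1' (x : ℝ) :
    HasDerivAt (fun τ => 4 * τ * Qtail τ - 4 * (1 / Real.sqrt (2 * π)) * Real.exp (-τ ^ 2 / 2))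
      (4 * Qtail x) x := by
  have hq := hasDerivAt_Qtail x
  have hg := hasDerivAt_g x
  have ha : HasDerivAt (fun τ : ℝ => 4 * τ) (4:ℝ) x := by
    simpa using (hasDerivAt_id x).const_mul (4:ℝ)
  have h := (ha.mul hq).sub (hg.const_mul (4 * (1 / Real.sqrt (2 * π))))
  convert h using 1; rfl; rfl; rfl
  ring

lemma Qtail_nonneg (x : ℝ) : 0 ≤ Qtail x := by
  apply mul_nonneg (by positivity)
  exact setIntegral_nonneg measurableSet_Ioi fun t _ => (Real.exp_pos _).le

theorem D_strictConvex (k n : ℕ) (hk : 0 < k) (hkn : k < n) :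
    StrictConvexOn ℝ (Set.Ioi 0)
      (fun lam : ℝ => (k : ℝ) * (1 + lam ^ 2) + ((n : ℝ) - k) * rho1 lam) := by
  set f : ℝ → ℝ := fun lam => (k : ℝ) * (1 + lam ^ 2) + ((n : ℝ) - k) * rho1 lam with hf
  have hf' : ∀ x : ℝ, HasDerivAt f
      (2 * k * x + ((n : ℝ) - k) * (4 * x * Qtail x
        - 4 * (1 / Real.sqrt (2 * π)) * Real.exp (-x ^ 2 / 2))) x := by
    intro x
    have h1 : HasDerivAt (fun lam : ℝ => (k : ℝ) * (1 + lam ^ 2)) (2 * k * x) x := by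
      have := ((hasDerivAt_pow 2 x).const_add 1).const_mul (k : ℝ)
      convert this using 1; rfl; rfl; simp; ring
    have h2 := (hasDerivAt_rho1 x).const_mul ((n : ℝ) - k)
    exact h1.add h2
  have hd : deriv f = fun x => 2 * k * x + ((n : ℝ) - k) * (4 * x * Qtail x
      - 4 * (1 / Real.sqrt (2 * π)) * Real.exp (-x ^ 2 / 2)) :=
    funext fun x => (hf' x).deriv
  have hf'' : ∀ x : ℝ, deriv (deriv f) x = 2 * k + ((n : ℝ) - k) * (4 * Qtail x) := by
    intro x
    rw [hd]
    have h1 : HasDerivAt (fun x : ℝ => 2 * (k:ℝ) * x) (2 * (k:ℝ)) x := by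
      simpa using (hasDerivAt_id x).const_mul (2 * (k:ℝ))
    have h2 := (hasDerivAt_rho1' x).const_mul ((n : ℝ) - k)
    exact (h1.add h2).deriv
  apply strictConvexOn_of_deriv2_pos (convex_Ioi 0)
  · exact fun x _ => (hf' x).differentiableAt.continuousAt.continuousWithinAt
  · intro x hx
    have : deriv^[2] f x = deriv (deriv f) x := rfl
    rw [this, hf'' x]
    have hnk : (0:ℝ) ≤ (n : ℝ) - k := by
      have : (k:ℝ) ≤ n := by exact_mod_cast hkn.le
      linarith
    have hk' : (0:ℝ) < k := by exact_mod_cast hk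
    nlinarith [Qtail_nonneg x]
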